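/- Let N ≥ 2, A₀, ℓ, L, ρ > 0, and let A:(0,∞)→ℝ be measurable with A₀(1+r^ℓ) ≤ A(r) ≤ A₀(1+r^L) for all r ∈ (0,ρ]. For an integer n ≥ 2 define the Moser function w̃_n on ℝ^N by w̃_n(x) := (log n)^{(N-1)/N} for |x| ≤ ρ/n, w̃_n(x) := log(ρ/|x|)/(log n)^{1/N} for ρ/n < |x| < ρ, and w̃_n(x) := 0 for |x| ≥ ρ. Then ∫_{ℝ^N} A(|x|)|∇w̃_n(x)|^N dx = (ω_{N-1}/log n) ∫_{ρ/n}^{ρ} A(r)/r dr, and consequently ω_{N-1} A₀ (1 + (ρ^ℓ - (ρ/n)^ℓ)/(ℓ log n)) ≤ ∫_{ℝ^N} A(|x|)|∇w̃_n|^N dx ≤ ω_{N-1} A₀ (1 + (ρ^L - (ρ/n)^L)/(L log n)). -/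

import Mathlib

open MeasureTheory Real Filter
open scoped Topology ENNReal RealInnerProductSpace

noncomputable section

/-- Euclidean space `ℝ^N`. -/
abbrev Rn (N : ℕ) := EuclideanSpace ℝ (Fin N)

/-- The constant `C_N = (2^{N-1} π^{N/2} Γ(N/2))⁻¹`. -/
def CN (N : ℕ) : ℝ :=
  ((2:ℝ) ^ (N - 1) * Real.pi ^ ((N:ℝ)/2) * Real.Gamma ((N:ℝ)/2))⁻¹

/-- Surface measure `ω_{N-1}` of the unit sphere in `ℝ^N`, i.e. `N · |B₁|`. -/
def omegaS (N : ℕ) : ℝ := (N : ℝ) * (volume (Metric.ball (0 : Rn N) 1)).toReal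

/-- Radial symmetry. -/
def IsRadial {N : ℕ} (u : Rn N → ℝ) : Prop := ∀ x y : Rn N, ‖x‖ = ‖y‖ → u x = u y

/-- Membership in the space `E`. -/
def memE (N : ℕ) (A : ℝ → ℝ) (u : Rn N → ℝ) : Prop :=
  MeasureTheory.LocallyIntegrable (fun x : Rn N => |u x| ^ N) volume ∧
  MeasureTheory.Integrable (fun x : Rn N => A ‖x‖ * ‖gradient u x‖ ^ N) volume

/-- The norm of `E`. -/
def normE (N : ℕ) (A : ℝ → ℝ) (u : Rn N → ℝ) : ℝ :=
  (∫ x : Rn N, A ‖x‖ * ‖gradient u x‖ ^ N) ^ ((N:ℝ)⁻¹)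

/-- Primitive `F(s) = ∫₀^s f`. -/
def Fprim (f : ℝ → ℝ) : ℝ → ℝ := fun s => ∫ t in (0:ℝ)..s, f t

/-- Approximating kernel `G_μ(r) = (r^{-μ}-1)/μ`. -/
def Gmu (μ r : ℝ) : ℝ := (r ^ (-μ) - 1) / μ

/-- Assumption (A). -/
def condA (A : ℝ → ℝ) (A0 ℓ : ℝ) : Prop :=
  ContinuousOn A (Set.Ioi 0) ∧ (∃ c > 0, ∀ᶠ r in 𝓝[>] (0:ℝ), c ≤ A r) ∧
  0 < A0 ∧ 0 < ℓ ∧ ∀ r > 0, A0 * r ^ ℓ ≤ A r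

/-- Assumption (Q). -/
def condQ (N : ℕ) (Q : ℝ → ℝ) (b0 b : ℝ) : Prop :=
  ContinuousOn Q (Set.Ioi 0) ∧ (∀ r > 0, 0 < Q r) ∧
  -(N:ℝ) < b0 ∧ -(N:ℝ) < b ∧
  (∃ M : ℝ, ∀ᶠ r in 𝓝[>] (0:ℝ), Q r / r ^ b0 ≤ M) ∧
  (∃ M : ℝ, ∀ᶠ r in atTop, Q r / r ^ b ≤ M)

/-- The exponent `γ`. -/
def gam (N : ℕ) (ℓ b : ℝ) : ℝ :=
  if b < ℓ - N then (N:ℝ) else (b - ℓ + N) * ((N:ℝ)+1) / ℓ + N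

/-- Assumption (A'). -/
def condA' (A : ℝ → ℝ) (A0 ℓ L r0 : ℝ) : Prop :=
  0 < r0 ∧ 0 < L ∧
  ∀ r : ℝ, 0 < r → r ≤ r0 → A0 * (1 + r ^ ℓ) ≤ A r ∧ A r ≤ A0 * (1 + r ^ L)

/-- `b̃₀ := max {b₀, b₀(1-μ₀/(2N))}`. -/
def tb0 (N : ℕ) (b0 μ0 : ℝ) : ℝ := max b0 (b0 * (1 - μ0 / (2*(N:ℝ))))

/-- Assumption (Q'). -/
def condQ' (Q : ℝ → ℝ) (t CQ : ℝ) : Prop :=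
  0 < CQ ∧ Filter.liminf (fun r => Q r / r ^ t) (𝓝[>] (0:ℝ)) = CQ

/-- Assumption (f0). -/
def condf0 (f : ℝ → ℝ) : Prop := (∀ t > 0, 0 < f t) ∧ ∀ t ≤ 0, f t = 0

/-- Assumption (f1). -/
def condf1 (N : ℕ) (f : ℝ → ℝ) (α0 : ℝ) : Prop :=
  ContDiffOn ℝ 1 f (Set.Ioi 0) ∧ 0 < α0 ∧
  (∀ α > α0,
    Tendsto (fun t => f t * Real.exp (-α * t ^ ((N:ℝ)/((N:ℝ)-1)))) atTop (𝓝 0)) ∧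
  (∀ α < α0,
    Tendsto (fun t => f t * Real.exp (-α * t ^ ((N:ℝ)/((N:ℝ)-1)))) atTop atTop)

/-- Assumption (f2): `f(t) = o(t^{p-1})` as `t → 0⁺`. -/
def condf2 (f : ℝ → ℝ) (p : ℝ) : Prop :=
  (fun t => f t) =o[𝓝[>] (0:ℝ)] fun t => t ^ (p - 1)

/-- Assumption (f3). -/
def condf3 (f : ℝ → ℝ) (τ C : ℝ) : Prop :=
  ∀ t > 0, τ ≤ Fprim f t * deriv f t / f t ^ 2 ∧ Fprim f t * deriv f t / f t ^ 2 ≤ C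

/-- Assumption (f4). -/
def condf4 (f : ℝ → ℝ) : Prop :=
  Tendsto (fun t => Fprim f t * deriv f t / f t ^ 2) atTop (𝓝 1)

/-- Assumption (f5), in the form `liminf_{t→∞} t^λ f(t)F(t) e^{-2α₀ t^{N/(N-1)}} ≥ β`. -/
def condf5 (N : ℕ) (f : ℝ → ℝ) (α0 β lam : ℝ) : Prop :=
  ∀ c < β, ∀ᶠ t in atTop,
    c ≤ t ^ lam * (f t * Fprim f t) * Real.exp (-(2*α0) * t ^ ((N:ℝ)/((N:ℝ)-1)))

/-- The explicit constant `β₀` (case `λ = 1 + N/(N-1)`), with `ρ = min{1/4, r₀, r_Q}`. -/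
def beta0 (N : ℕ) (A0 α0 CQ t r0 rQ L : ℝ) : ℝ :=
  (A0 / omegaS N) * (2 * (t + (N:ℝ)) ^ ((N:ℝ) + 2)) /
    (α0 ^ N * CN N * CQ ^ 2 * (min (1/4) (min r0 rQ)) ^ (2 * (t + (N:ℝ)))) *
    Real.exp (2 * (t + (N:ℝ)) * (min (1/4) (min r0 rQ)) ^ L / (((N:ℝ) - 1) * L))

/-- The threshold `β₀` in (f5): `0` if `λ < 1 + N/(N-1)`, the explicit constant otherwise. -/
def beta0' (N : ℕ) (A0 α0 CQ t r0 rQ L lam : ℝ) : ℝ :=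
  if lam < 1 + (N:ℝ)/((N:ℝ)-1) then 0 else beta0 N A0 α0 CQ t r0 rQ L

/-- Weak solution of the logarithmic Choquard equation. -/
def weakSolLog (N : ℕ) (A Q f : ℝ → ℝ) (u : Rn N → ℝ) : Prop :=
  ∀ φ : Rn N → ℝ, memE N A φ →
    (∫ x : Rn N, A ‖x‖ * ‖gradient u x‖ ^ (N - 2) * ⟪gradient u x, gradient φ x⟫) =
    CN N * ∫ x : Rn N,
      (∫ y : Rn N, Real.log (1 / ‖x - y‖) * (Q ‖y‖ * Fprim f (u y))) *
        (Q ‖x‖ * f (u x) * φ x)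

/-- Weak solution of the approximating Choquard equation. -/
def weakSolMu (N : ℕ) (A Q f : ℝ → ℝ) (μ : ℝ) (u : Rn N → ℝ) : Prop :=
  ∀ φ : Rn N → ℝ, memE N A φ →
    (∫ x : Rn N, A ‖x‖ * ‖gradient u x‖ ^ (N - 2) * ⟪gradient u x, gradient φ x⟫) =
    CN N * ∫ x : Rn N,
      (∫ y : Rn N, Gmu μ ‖x - y‖ * (Q ‖y‖ * Fprim f (u y))) *
        (Q ‖x‖ * f (u x) * φ x)

/-- The approximating functional `J_μ`. -/
def Jmu (N : ℕ) (A Q f : ℝ → ℝ) (μ : ℝ) (u : Rn N → ℝ) : ℝ :=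
  (1 / (N:ℝ)) * (∫ x : Rn N, A ‖x‖ * ‖gradient u x‖ ^ N) -
  (CN N / 2) * ∫ x : Rn N, ∫ y : Rn N,
    Gmu μ ‖x - y‖ * (Q ‖x‖ * Fprim f (u x)) * (Q ‖y‖ * Fprim f (u y))

/-- The mountain pass level `c_μ`. -/
def cMP (N : ℕ) (A Q f : ℝ → ℝ) (μ : ℝ) : ℝ :=
  sInf {c : ℝ | ∃ γ : ℝ → Rn N → ℝ,
    γ 0 = 0 ∧ (∀ t ∈ Set.Icc (0:ℝ) 1, memE N A (γ t)) ∧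
    (∀ t ∈ Set.Icc (0:ℝ) 1,
      Tendsto (fun s => normE N A (fun x => γ s x - γ t x)) (𝓝[Set.Icc (0:ℝ) 1] t) (𝓝 0)) ∧
    Jmu N A Q f μ (γ 1) < 0 ∧
    c = ⨆ t : Set.Icc (0:ℝ) 1, Jmu N A Q f μ (γ t.1)}

set_option maxHeartbeats 1000000 in
theorem moser_function_energy (N : ℕ) (hN : 2 ≤ N) (A : ℝ → ℝ)
    (A0 ℓ L ρ : ℝ)
    (hA0 : 0 < A0) (hℓ : 0 < ℓ) (hL : 0 < L) (hρ : 0 < ρ)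
    (hmeas : Measurable A)
    (hbound : ∀ r : ℝ, 0 < r → r ≤ ρ → A0 * (1 + r ^ ℓ) ≤ A r ∧ A r ≤ A0 * (1 + r ^ L))
    (n : ℕ) (hn : 2 ≤ n)
    (w : Rn N → ℝ)
    (hw : w = fun x => if ‖x‖ ≤ ρ / n then (Real.log n) ^ (((N:ℝ) - 1)/(N:ℝ))
      else if ‖x‖ < ρ then Real.log (ρ / ‖x‖) / (Real.log n) ^ ((N:ℝ)⁻¹) else 0) :
    (∫ x : Rn N, A ‖x‖ * ‖gradient w x‖ ^ N) =
      (omegaS N / Real.log n) * ∫ r in (ρ/(n:ℝ))..ρ, A r / r ∧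
    omegaS N * A0 * (1 + (ρ ^ ℓ - (ρ/(n:ℝ)) ^ ℓ) / (ℓ * Real.log n)) ≤
      (∫ x : Rn N, A ‖x‖ * ‖gradient w x‖ ^ N) ∧
    (∫ x : Rn N, A ‖x‖ * ‖gradient w x‖ ^ N) ≤
      omegaS N * A0 * (1 + (ρ ^ L - (ρ/(n:ℝ)) ^ L) / (L * Real.log n)) := by
  -- setup
  have hn1 : (1:ℝ) < (n:ℝ) := by exact_mod_cast Nat.lt_of_lt_of_le Nat.one_lt_two hn
  have hlog : 0 < Real.log n := Real.log_pos hn1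
  have hNne : N ≠ 0 := by omega
  set a : ℝ := ρ / (n:ℝ) with ha_def
  have ha : 0 < a := by positivity
  have haρ : a < ρ := by
    rw [ha_def, div_lt_iff₀ (by positivity)]
    nlinarith
  set c' : ℝ := (Real.log n) ^ ((N:ℝ)⁻¹) with hc'_def
  have hc' : 0 < c' := Real.rpow_pos_of_pos hlog _
  have hcN : c' ^ N = Real.log n := Real.rpow_inv_natCast_pow hlog.le hNne
  set g : ℝ → ℝ := fun r => if r ∈ Set.Ioo a ρ then A r / (r ^ N * Real.log n) else 0
    with hg_def
  -- pointwise computation of the integrand away from the two spheres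
  have hgrad : ∀ x : Rn N, ‖x‖ ≠ a → ‖x‖ ≠ ρ →
      A ‖x‖ * ‖gradient w x‖ ^ N = g ‖x‖ := by
    intro x hxa hxρ
    by_cases h1 : ‖x‖ < a
    · -- inner ball : w locally constant
      have hmem : x ∈ Metric.ball (0 : Rn N) a := by simpa [mem_ball_zero_iff] using h1
      have hev : w =ᶠ[𝓝 x] fun _ => (Real.log n) ^ (((N:ℝ) - 1)/(N:ℝ)) := by
        filter_upwards [Metric.isOpen_ball.mem_nhds hmem] with y hy
        rw [hw]
        simp only
        rw [if_pos (le_of_lt (mem_ball_zero_iff.mp hy))]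
      have hgr : gradient w x = 0 := by
        unfold gradient
        rw [hev.fderiv_eq]
        simp
      rw [hgr, hg_def]
      simp only [norm_zero, Set.mem_Ioo]
      rw [zero_pow hNne, mul_zero,
        if_neg (fun hmem' : a < ‖x‖ ∧ ‖x‖ < ρ => absurd hmem'.1 (not_lt.mpr h1.le))]
    · by_cases h2 : ‖x‖ < ρ
      · -- annulus
        have hax : a < ‖x‖ := lt_of_le_of_ne (not_lt.mp h1) (Ne.symm hxa)
        have hx0 : 0 < ‖x‖ := ha.trans hax
        have hUopen : IsOpen ((fun y : Rn N => ‖y‖) ⁻¹' Set.Ioo a ρ) :=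
          isOpen_Ioo.preimage continuous_norm
        have hxU : x ∈ (fun y : Rn N => ‖y‖) ⁻¹' Set.Ioo a ρ := ⟨hax, h2⟩
        have hev : w =ᶠ[𝓝 x]
            fun y => Real.log ρ / c' - (2*c')⁻¹ * Real.log (‖y‖^2) := by
          filter_upwards [hUopen.mem_nhds hxU] with y hy
          obtain ⟨hy1, hy2⟩ := hy
          have hy0 : 0 < ‖y‖ := ha.trans hy1
          rw [hw]
          simp only
          rw [if_neg (not_le.mpr hy1), if_pos hy2,
            Real.log_div (ne_of_gt hρ) (ne_of_gt hy0), Real.log_pow]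
          push_cast
          field_simp
        have hd1 : HasFDerivAt (fun y : Rn N => ‖y‖^2) (2 • (innerSL ℝ x)) x :=
          (hasStrictFDerivAt_norm_sq x).hasFDerivAt
        have hd2 : HasDerivAt Real.log (‖x‖^2)⁻¹ (‖x‖^2) :=
          Real.hasDerivAt_log (by positivity)
        have hd3 : HasFDerivAt (fun y : Rn N => Real.log (‖y‖^2))
            ((‖x‖^2)⁻¹ • (2 • innerSL ℝ x)) x := hd2.comp_hasFDerivAt (f := fun y : Rn N => ‖y‖^2) x hd1
        have hd4 : HasFDerivAt
            (fun y : Rn N => Real.log ρ / c' - (2*c')⁻¹ * Real.log (‖y‖^2))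
            (-((2*c')⁻¹ • ((‖x‖^2)⁻¹ • (2 • innerSL ℝ x)))) x :=
          (hd3.const_mul ((2*c')⁻¹)).const_sub _
        have hd5 : HasFDerivAt w (-((2*c')⁻¹ • ((‖x‖^2)⁻¹ • (2 • innerSL ℝ x)))) x :=
          hd4.congr_of_eventuallyEq hev
        have hnorm : ‖gradient w x‖ = (c' * ‖x‖)⁻¹ := by
          unfold gradient
          rw [hd5.fderiv, LinearIsometryEquiv.norm_map, norm_neg, norm_smul, norm_smul,
            ← Nat.cast_smul_eq_nsmul ℝ 2 (innerSL ℝ x), norm_smul, innerSL_apply_norm]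
          simp only [Real.norm_eq_abs, norm_inv, norm_pow]
          rw [abs_of_pos (by positivity : (0:ℝ) < 2*c'), abs_norm, Nat.abs_cast]
          push_cast
          field_simp
        rw [hnorm, hg_def]
        simp only [Set.mem_Ioo]
        rw [if_pos (And.intro hax h2), mul_inv, mul_pow, inv_pow, inv_pow, hcN,
          div_eq_mul_inv, mul_inv]
        ring
      · -- outside the support
        have hρx : ρ < ‖x‖ := lt_of_le_of_ne (not_lt.mp h2) (Ne.symm hxρ)
        have hUopen : IsOpen ((fun y : Rn N => ‖y‖) ⁻¹' Set.Ioi ρ) :=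
          isOpen_Ioi.preimage continuous_norm
        have hev : w =ᶠ[𝓝 x] fun _ => (0:ℝ) := by
          filter_upwards [hUopen.mem_nhds hρx] with y hy
          have hy1 : ρ < ‖y‖ := hy
          rw [hw]
          simp only
          rw [if_neg (not_le.mpr (lt_trans haρ hy1)), if_neg (not_lt.mpr hy1.le)]
        have hgr : gradient w x = 0 := by
          unfold gradient
          rw [hev.fderiv_eq]
          simp
        rw [hgr, hg_def]
        simp only [norm_zero, Set.mem_Ioo]
        rw [zero_pow hNne, mul_zero,
          if_neg (fun hmem' : a < ‖x‖ ∧ ‖x‖ < ρ => absurd hmem'.2 (not_lt.mpr hρx.le))]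
  -- almost-everywhere identification
  haveI : Nontrivial (Rn N) := by
    refine ⟨0, EuclideanSpace.single (⟨0, by omega⟩ : Fin N) (1:ℝ), fun h => ?_⟩
    have := congrFun (congrArg (fun v : Rn N => (v : Fin N → ℝ)) h) ⟨0, by omega⟩
    simp [EuclideanSpace.single] at this
  have hsa : (volume : Measure (Rn N)) (Metric.sphere 0 a) = 0 :=
    Measure.addHaar_sphere _ _ _
  have hsρ : (volume : Measure (Rn N)) (Metric.sphere 0 ρ) = 0 :=
    Measure.addHaar_sphere _ _ _
  have hae : (fun x : Rn N => A ‖x‖ * ‖gradient w x‖ ^ N) =ᵐ[volume]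
      fun x => g ‖x‖ := by
    have h1 : ∀ᵐ x : Rn N ∂volume, ‖x‖ ≠ a := by
      rw [ae_iff]
      refine measure_mono_null (fun y hy => ?_) hsa
      simp only [Set.mem_setOf_eq, not_not] at hy
      simpa [mem_sphere_zero_iff_norm] using hy
    have h2 : ∀ᵐ x : Rn N ∂volume, ‖x‖ ≠ ρ := by
      rw [ae_iff]
      refine measure_mono_null (fun y hy => ?_) hsρ
      simp only [Set.mem_setOf_eq, not_not] at hy
      simpa [mem_sphere_zero_iff_norm] using hy
    filter_upwards [h1, h2] with x hx1 hx2
    exact hgrad x hx1 hx2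
  -- radial integration
  have hdim : Module.finrank ℝ (Rn N) = N := finrank_euclideanSpace_fin
  have hfun : (fun r : ℝ => r ^ (N - 1) • g r) =
      fun r => (Real.log n)⁻¹ * Set.indicator (Set.Ioo a ρ) (fun s => A s / s) r := by
    funext r
    by_cases hr : r ∈ Set.Ioo a ρ
    · have hr0 : 0 < r := ha.trans hr.1
      have hpow : r ^ N = r ^ (N - 1) * r := by
        rw [← pow_succ]
        congr 1
        omega
      rw [Set.indicator_of_mem hr]
      simp only [smul_eq_mul, hg_def, Set.mem_Ioo]
      rw [if_pos (And.intro hr.1 hr.2), hpow]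
      field_simp
    · rw [Set.indicator_of_notMem hr]
      simp only [smul_eq_mul, hg_def, Set.mem_Ioo]
      rw [if_neg (fun hmem : a < r ∧ r < ρ => hr ⟨hmem.1, hmem.2⟩), mul_zero, mul_zero]
  have hIoosub : Set.Ioo a ρ ⊆ Set.Ioi (0:ℝ) := fun y hy => ha.trans hy.1
  have key : (∫ x : Rn N, A ‖x‖ * ‖gradient w x‖ ^ N) =
      (omegaS N / Real.log n) * ∫ r in a..ρ, A r / r := by
    rw [integral_congr_ae hae, integral_fun_norm_addHaar volume g, hdim, hfun,
      integral_const_mul, setIntegral_indicator measurableSet_Ioo,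
      Set.inter_eq_self_of_subset_right hIoosub, ← integral_Ioc_eq_integral_Ioo,
      ← intervalIntegral.integral_of_le haρ.le]
    rw [nsmul_eq_mul, smul_eq_mul, omegaS, measureReal_def]
    ring
  -- explicit integral of the comparison functions
  have h0uIcc : (0:ℝ) ∉ Set.uIcc a ρ := by
    rw [Set.uIcc_of_le haρ.le]
    exact fun h => absurd h.1 (not_le.mpr ha)
  have hbig : ∀ t : ℝ, 0 < t →
      ∫ r in a..ρ, A0 * (1 + r ^ t) / r = A0 * (Real.log n + (ρ ^ t - a ^ t) / t) := by
    intro t ht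
    have hcong : Set.EqOn (fun r : ℝ => A0 * (1 + r ^ t) / r)
        (fun r : ℝ => A0 * (1/r) + A0 * r ^ (t-1)) (Set.uIcc a ρ) := by
      intro r hr
      have hr0 : 0 < r := by
        rw [Set.uIcc_of_le haρ.le] at hr
        exact lt_of_lt_of_le ha hr.1
      simp only
      rw [Real.rpow_sub hr0, Real.rpow_one]
      field_simp
    have hi1 : IntervalIntegrable (fun r : ℝ => A0 * (1/r)) volume a ρ := by
      apply ContinuousOn.intervalIntegrable
      intro r hr
      have hr0 : 0 < r := by
        rw [Set.uIcc_of_le haρ.le] at hr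
        exact lt_of_lt_of_le ha hr.1
      exact (continuousAt_const.mul
        (continuousAt_const.div continuousAt_id hr0.ne')).continuousWithinAt
    have hi2 : IntervalIntegrable (fun r : ℝ => A0 * r ^ (t-1)) volume a ρ := by
      apply ContinuousOn.intervalIntegrable
      intro r hr
      have hr0 : 0 < r := by
        rw [Set.uIcc_of_le haρ.le] at hr
        exact lt_of_lt_of_le ha hr.1
      exact (continuousAt_const.mul
        (Real.continuousAt_rpow_const r (t-1) (Or.inl hr0.ne'))).continuousWithinAt
    rw [intervalIntegral.integral_congr hcong,
      intervalIntegral.integral_add hi1 hi2,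
      intervalIntegral.integral_const_mul, intervalIntegral.integral_const_mul,
      integral_one_div h0uIcc, integral_rpow (Or.inl (by linarith : (-1:ℝ) < t - 1))]
    have h1 : t - 1 + 1 = t := by ring
    have h2 : ρ / a = n := by
      rw [ha_def]
      field_simp
    rw [h1, h2]
    ring
  -- integrability of A r / r
  have hint : IntervalIntegrable (fun r => A r / r) volume a ρ := by
    rw [intervalIntegrable_iff_integrableOn_Ioc_of_le haρ.le]
    apply Measure.integrableOn_of_bounded (M := A0 * (1 + ρ ^ L) / a) measure_Ioc_lt_top.ne
    · exact (hmeas.div measurable_id).aestronglyMeasurable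
    · rw [ae_restrict_iff' measurableSet_Ioc]
      refine ae_of_all _ fun r hr => ?_
      have hr0 : 0 < r := ha.trans hr.1
      have hrL : r ^ L ≤ ρ ^ L := Real.rpow_le_rpow hr0.le hr.2 hL.le
      have hAub : A r ≤ A0 * (1 + ρ ^ L) :=
        le_trans (hbound r hr0 hr.2).2 (by nlinarith)
      have hAlb : 0 ≤ A r := by
        refine le_trans ?_ (hbound r hr0 hr.2).1
        have : 0 < r ^ ℓ := Real.rpow_pos_of_pos hr0 _
        positivity
      rw [Real.norm_eq_abs, abs_div, abs_of_nonneg hAlb, abs_of_pos hr0]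
      exact div_le_div₀ (by positivity) hAub ha hr.1.le
  have hcontc : ∀ t : ℝ, IntervalIntegrable (fun r : ℝ => A0 * (1 + r ^ t) / r)
      volume a ρ := by
    intro t
    apply ContinuousOn.intervalIntegrable
    intro r hr
    have hr0 : 0 < r := by
      rw [Set.uIcc_of_le haρ.le] at hr
      exact lt_of_lt_of_le ha hr.1
    exact ((continuousAt_const.mul (continuousAt_const.add
      (Real.continuousAt_rpow_const r t (Or.inl hr0.ne')))).div
      continuousAt_id hr0.ne').continuousWithinAt
  -- the two comparison inequalities for the interval integral
  have hlow : A0 * (Real.log n + (ρ ^ ℓ - a ^ ℓ) / ℓ) ≤ ∫ r in a..ρ, A r / r := by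
    rw [← hbig ℓ hℓ]
    refine intervalIntegral.integral_mono_on haρ.le (hcontc ℓ) hint fun r hr => ?_
    have hr0 : 0 < r := lt_of_lt_of_le ha hr.1
    exact (div_le_div_iff_of_pos_right hr0).mpr (hbound r hr0 hr.2).1
  have hupp : (∫ r in a..ρ, A r / r) ≤ A0 * (Real.log n + (ρ ^ L - a ^ L) / L) := by
    rw [← hbig L hL]
    refine intervalIntegral.integral_mono_on haρ.le hint (hcontc L) fun r hr => ?_
    have hr0 : 0 < r := lt_of_lt_of_le ha hr.1
    exact (div_le_div_iff_of_pos_right hr0).mpr (hbound r hr0 hr.2).2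
  have hω : 0 ≤ omegaS N := by
    rw [omegaS]
    positivity
  have hωdiv : 0 ≤ omegaS N / Real.log n := by positivity
  refine ⟨key, ?_, ?_⟩
  · have heq : omegaS N * A0 * (1 + (ρ ^ ℓ - a ^ ℓ) / (ℓ * Real.log n)) =
        (omegaS N / Real.log n) * (A0 * (Real.log n + (ρ ^ ℓ - a ^ ℓ) / ℓ)) := by
      field_simp
    rw [key, heq]
    exact mul_le_mul_of_nonneg_left hlow hωdiv
  · have heq : omegaS N * A0 * (1 + (ρ ^ L - a ^ L) / (L * Real.log n)) =
        (omegaS N / Real.log n) * (A0 * (Real.log n + (ρ ^ L - a ^ L) / L)) := by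
      field_simp
    rw [key, heq]
    exact mul_le_mul_of_nonneg_left hupp hωdiv

end
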